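/- arXiv:2006.04144 — 2 statements merged into one kernel-verified Lean document; each statement's English description precedes it below -/
import Mathlib

section
/- For the digital image MSS′₆ (the discrete cube {0,1}³ in ℤ³ with 6-adjacency), the image of the coboundary map δ⁰ : C⁰ ≅ ℤ⁸ → C¹ ≅ ℤ¹² is a free abelian group of rank 7, and consequently the first digital simplicial cohomology group H^{1,6}(MSS′₆) = C¹/Im δ⁰ (noting δ¹ = 0 since there are no 2-simplices) is isomorphic to ℤ⁵. -/
/-- `6`-adjacency (c₁-adjacency) on `ℤ³`. -/
def adj6 (x y : Fin 3 → ℤ) : Prop :=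
  ∃ i, |x i - y i| = 1 ∧ ∀ j, j ≠ i → x j = y j

/-- The vertex set of `MSS′₆`: the discrete cube `{0,1}³ ⊆ ℤ³`. -/
def CubeVertex : Type := {x : Fin 3 → ℤ // ∀ i, x i = 0 ∨ x i = 1}

/-- The oriented edges of `MSS′₆`: pairs of `6`-adjacent vertices, oriented from the
smaller to the larger coordinate sum (this picks one orientation of each of the 12
adjacency edges of the cube). -/
def CubeEdge : Type :=
  {p : CubeVertex × CubeVertex //
    adj6 p.1.1 p.2.1 ∧ (∑ i, p.1.1 i) < (∑ i, p.2.1 i)}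

/-- The coboundary map `δ⁰ : C⁰ → C¹`, sending a `0`-cochain `φ` to the `1`-cochain
whose value on an oriented edge is `φ(endpoint) − φ(startpoint)`. -/
def delta0 : (CubeVertex → ℤ) →+ (CubeEdge → ℤ) :=
  AddMonoidHom.mk' (fun φ e => φ e.1.2 - φ e.1.1) (by
    intro a b; funext e; simp [Pi.add_apply]; ring)

/-! ### Auxiliary setup -/

instance adj6.dec (x y : Fin 3 → ℤ) : Decidable (adj6 x y) := by
  unfold adj6; infer_instance

instance : DecidableEq CubeVertex :=
  inferInstanceAs (DecidableEq {x : Fin 3 → ℤ // ∀ i, x i = 0 ∨ x i = 1})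

instance : DecidableEq CubeEdge :=
  inferInstanceAs (DecidableEq {p : CubeVertex × CubeVertex //
    adj6 p.1.1 p.2.1 ∧ (∑ i, p.1.1 i) < (∑ i, p.2.1 i)})

def bit (b : Bool) : ℤ := if b then 1 else 0

def vtx (a b c : Bool) : CubeVertex :=
  ⟨![bit a, bit b, bit c], by cases a <;> cases b <;> cases c <;> decide⟩

lemma bit_decide {x : ℤ} (h : x = 0 ∨ x = 1) : bit (decide (x = 1)) = x := by
  rcases h with h | h <;> rw [h] <;> rfl

lemma vtx_cases (v : CubeVertex) :
    ∃ a b c, v = vtx a b c := by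
  refine ⟨decide (v.1 0 = 1), decide (v.1 1 = 1), decide (v.1 2 = 1), ?_⟩
  refine Subtype.ext (funext fun i => ?_)
  fin_cases i <;>
    simp only [vtx, Matrix.cons_val_zero, Matrix.cons_val_one, Matrix.head_cons,
      Matrix.cons_val_two, Matrix.tail_cons] <;>
    exact (bit_decide (v.2 _)).symm

/-! The 12 edges: 7 tree edges `T0`–`T6` and 5 non-tree edges `N0`–`N4`. -/

def T0 : CubeEdge := ⟨(vtx false false false, vtx true false false), by decide⟩
def T1 : CubeEdge := ⟨(vtx false false false, vtx false true false), by decide⟩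
def T2 : CubeEdge := ⟨(vtx false false false, vtx false false true), by decide⟩
def T3 : CubeEdge := ⟨(vtx true false false, vtx true true false), by decide⟩
def T4 : CubeEdge := ⟨(vtx true false false, vtx true false true), by decide⟩
def T5 : CubeEdge := ⟨(vtx false true false, vtx false true true), by decide⟩
def T6 : CubeEdge := ⟨(vtx true true false, vtx true true true), by decide⟩
def N0 : CubeEdge := ⟨(vtx false true false, vtx true true false), by decide⟩
def N1 : CubeEdge := ⟨(vtx false false true, vtx true false true), by decide⟩
def N2 : CubeEdge := ⟨(vtx false true true, vtx true true true), by decide⟩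
def N3 : CubeEdge := ⟨(vtx false false true, vtx false true true), by decide⟩
def N4 : CubeEdge := ⟨(vtx true false true, vtx true true true), by decide⟩

lemma classify : ∀ (a b c d e f : Bool),
    adj6 (vtx a b c).1 (vtx d e f).1 →
    (∑ i, (vtx a b c).1 i) < (∑ i, (vtx d e f).1 i) →
    ((vtx a b c, vtx d e f) = T0.1 ∨ (vtx a b c, vtx d e f) = T1.1 ∨
     (vtx a b c, vtx d e f) = T2.1 ∨ (vtx a b c, vtx d e f) = T3.1 ∨
     (vtx a b c, vtx d e f) = T4.1 ∨ (vtx a b c, vtx d e f) = T5.1 ∨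
     (vtx a b c, vtx d e f) = T6.1 ∨ (vtx a b c, vtx d e f) = N0.1 ∨
     (vtx a b c, vtx d e f) = N1.1 ∨ (vtx a b c, vtx d e f) = N2.1 ∨
     (vtx a b c, vtx d e f) = N3.1 ∨ (vtx a b c, vtx d e f) = N4.1) := by
  decide

lemma edge_cases (e : CubeEdge) :
    e = T0 ∨ e = T1 ∨ e = T2 ∨ e = T3 ∨ e = T4 ∨ e = T5 ∨ e = T6 ∨
    e = N0 ∨ e = N1 ∨ e = N2 ∨ e = N3 ∨ e = N4 := by
  obtain ⟨⟨u, v⟩, h1, h2⟩ := e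
  obtain ⟨a, b, c, rfl⟩ := vtx_cases u
  obtain ⟨d, e', f, rfl⟩ := vtx_cases v
  rcases classify a b c d e' f h1 h2 with
    h | h | h | h | h | h | h | h | h | h | h | h
  · exact Or.inl (Subtype.ext h)
  · exact Or.inr (Or.inl (Subtype.ext h))
  · exact Or.inr (Or.inr (Or.inl (Subtype.ext h)))
  · exact Or.inr (Or.inr (Or.inr (Or.inl (Subtype.ext h))))
  · exact Or.inr (Or.inr (Or.inr (Or.inr (Or.inl (Subtype.ext h)))))
  · exact Or.inr (Or.inr (Or.inr (Or.inr (Or.inr (Or.inl (Subtype.ext h))))))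
  · exact Or.inr (Or.inr (Or.inr (Or.inr (Or.inr (Or.inr (Or.inl (Subtype.ext h)))))))
  · exact Or.inr (Or.inr (Or.inr (Or.inr (Or.inr (Or.inr (Or.inr (Or.inl (Subtype.ext h))))))))
  · exact Or.inr (Or.inr (Or.inr (Or.inr (Or.inr (Or.inr (Or.inr (Or.inr (Or.inl (Subtype.ext h)))))))))
  · exact Or.inr (Or.inr (Or.inr (Or.inr (Or.inr (Or.inr (Or.inr (Or.inr (Or.inr (Or.inl (Subtype.ext h))))))))))
  · exact Or.inr (Or.inr (Or.inr (Or.inr (Or.inr (Or.inr (Or.inr (Or.inr (Or.inr (Or.inr (Or.inl (Subtype.ext h)))))))))))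
  · exact Or.inr (Or.inr (Or.inr (Or.inr (Or.inr (Or.inr (Or.inr (Or.inr (Or.inr (Or.inr (Or.inr (Subtype.ext h)))))))))))

lemma delta0_apply (φ : CubeVertex → ℤ) (e : CubeEdge) :
    delta0 φ e = φ e.1.2 - φ e.1.1 := rfl

/-- The tree edges indexed by `Fin 7`. -/
def treeEdge : Fin 7 → CubeEdge
  | 0 => T0 | 1 => T1 | 2 => T2 | 3 => T3 | 4 => T4 | 5 => T5 | 6 => T6

/-- Restriction of `δ⁰` to tree edges, `C⁰ → ℤ⁷`. -/
def hmap : (CubeVertex → ℤ) →+ (Fin 7 → ℤ) :=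
  AddMonoidHom.mk' (fun φ j => φ (treeEdge j).1.2 - φ (treeEdge j).1.1) (by
    intro a b; funext j; simp [Pi.add_apply]; ring)

/-- Potential function: vertex potential matching prescribed tree-edge values. -/
def pot (t : Fin 7 → ℤ) (v : CubeVertex) : ℤ :=
  v.1 0 * t 0 + v.1 1 * t 1 + v.1 2 * t 2 + v.1 0 * v.1 1 * (t 3 - t 1) +
    v.1 0 * v.1 2 * (t 4 - t 2) + v.1 1 * v.1 2 * (t 5 - t 2) +
    v.1 0 * v.1 1 * v.1 2 * (t 6 - t 4 - t 5 + t 2)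

lemma pot_vtx (t : Fin 7 → ℤ) (a b c : Bool) :
    pot t (vtx a b c) = bit a * t 0 + bit b * t 1 + bit c * t 2 +
      bit a * bit b * (t 3 - t 1) + bit a * bit c * (t 4 - t 2) +
      bit b * bit c * (t 5 - t 2) + bit a * bit b * bit c * (t 6 - t 4 - t 5 + t 2) := rfl

lemma hmap_pot (t : Fin 7 → ℤ) : hmap (pot t) = t := by
  funext j
  fin_cases j <;>
    (simp [hmap, treeEdge, T0, T1, T2, T3, T4, T5, T6, pot_vtx, bit]; try ring)

lemma hmap_surj : Function.Surjective hmap :=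
  fun t => ⟨pot t, hmap_pot t⟩

lemma ker_eq : hmap.ker = delta0.ker := by
  ext φ
  simp only [AddMonoidHom.mem_ker]
  constructor
  · intro h
    have h0 : delta0 φ T0 = 0 := congrFun h 0
    have h1 : delta0 φ T1 = 0 := congrFun h 1
    have h2 : delta0 φ T2 = 0 := congrFun h 2
    have h3 : delta0 φ T3 = 0 := congrFun h 3
    have h4 : delta0 φ T4 = 0 := congrFun h 4
    have h5 : delta0 φ T5 = 0 := congrFun h 5
    have h6 : delta0 φ T6 = 0 := congrFun h 6
    simp only [delta0_apply] at h0 h1 h2 h3 h4 h5 h6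
    simp only [delta0_apply, T0, T1, T2, T3, T4, T5, T6, sub_eq_zero] at h0 h1 h2 h3 h4 h5 h6
    funext e
    rcases edge_cases e with rfl | rfl | rfl | rfl | rfl | rfl | rfl | rfl | rfl | rfl | rfl | rfl <;>
      simp only [Pi.zero_apply, delta0_apply] <;>
      simp only [delta0_apply, T0, T1, T2, T3, T4, T5, T6, N0, N1, N2, N3, N4,
        Pi.zero_apply, sub_eq_zero] <;>
      omega
  · intro h
    funext j
    show delta0 φ (treeEdge j) = 0
    rw [h]; rfl

/-- The five cycle coordinates of a `1`-cochain. -/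
def qfun (c : CubeEdge → ℤ) : Fin 5 → ℤ
  | 0 => c N0 - c T0 - c T3 + c T1
  | 1 => c N1 - c T0 - c T4 + c T2
  | 2 => c N2 - c T0 - c T3 - c T6 + c T1 + c T5
  | 3 => c N3 - c T1 - c T5 + c T2
  | 4 => c N4 - c T3 - c T6 + c T4

/-- The "cycle coordinates" map `C¹ → ℤ⁵`. -/
def qmap : (CubeEdge → ℤ) →+ (Fin 5 → ℤ) :=
  AddMonoidHom.mk' qfun (by
    intro a b; funext k
    fin_cases k <;> simp [qfun, Pi.add_apply] <;> ring)

/-- A right inverse for `qmap`, supported on the non-tree edges. -/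
def sec (t : Fin 5 → ℤ) : CubeEdge → ℤ := fun e =>
  if e = N0 then t 0 else if e = N1 then t 1 else if e = N2 then t 2
  else if e = N3 then t 3 else if e = N4 then t 4 else 0

lemma N0_fst : (N0.1.1 : CubeVertex) = vtx false true false := rfl
lemma N0_snd : (N0.1.2 : CubeVertex) = vtx true true false := rfl
lemma N1_fst : (N1.1.1 : CubeVertex) = vtx false false true := rfl
lemma N1_snd : (N1.1.2 : CubeVertex) = vtx true false true := rfl
lemma N2_fst : (N2.1.1 : CubeVertex) = vtx false true true := rfl
lemma N2_snd : (N2.1.2 : CubeVertex) = vtx true true true := rfl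
lemma N3_fst : (N3.1.1 : CubeVertex) = vtx false false true := rfl
lemma N3_snd : (N3.1.2 : CubeVertex) = vtx false true true := rfl
lemma N4_fst : (N4.1.1 : CubeVertex) = vtx true false true := rfl
lemma N4_snd : (N4.1.2 : CubeVertex) = vtx true true true := rfl
lemma treeEdge_eq0 : treeEdge 0 = T0 := rfl
lemma treeEdge_eq1 : treeEdge 1 = T1 := rfl
lemma treeEdge_eq2 : treeEdge 2 = T2 := rfl
lemma treeEdge_eq3 : treeEdge 3 = T3 := rfl
lemma treeEdge_eq4 : treeEdge 4 = T4 := rfl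
lemma treeEdge_eq5 : treeEdge 5 = T5 := rfl
lemma treeEdge_eq6 : treeEdge 6 = T6 := rfl

lemma qmap_sec (t : Fin 5 → ℤ) : qmap (sec t) = t := by
  funext k
  fin_cases k <;> simp (config := { decide := true }) [qmap, qfun, sec]

lemma qmap_surj : Function.Surjective qmap := fun t => ⟨sec t, qmap_sec t⟩

lemma qker_eq : qmap.ker = delta0.range := by
  ext c
  simp only [AddMonoidHom.mem_ker, AddMonoidHom.mem_range]
  constructor
  · intro h
    have h0 : c N0 - c T0 - c T3 + c T1 = 0 := congrFun h 0
    have h1 : c N1 - c T0 - c T4 + c T2 = 0 := congrFun h 1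
    have h2 : c N2 - c T0 - c T3 - c T6 + c T1 + c T5 = 0 := congrFun h 2
    have h3 : c N3 - c T1 - c T5 + c T2 = 0 := congrFun h 3
    have h4 : c N4 - c T3 - c T6 + c T4 = 0 := congrFun h 4
    refine ⟨pot (fun j => c (treeEdge j)), ?_⟩
    have ht := hmap_pot (fun j => c (treeEdge j))
    funext e
    rcases edge_cases e with rfl | rfl | rfl | rfl | rfl | rfl | rfl | rfl | rfl | rfl | rfl | rfl
    · exact congrFun ht 0
    · exact congrFun ht 1
    · exact congrFun ht 2
    · exact congrFun ht 3
    · exact congrFun ht 4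
    · exact congrFun ht 5
    · exact congrFun ht 6
    all_goals (
      simp only [delta0_apply, N0_fst, N0_snd, N1_fst, N1_snd, N2_fst, N2_snd,
        N3_fst, N3_snd, N4_fst, N4_snd, pot_vtx, bit, if_true,
        Bool.false_eq_true, ite_false, ite_true, treeEdge_eq0, treeEdge_eq1,
        treeEdge_eq2, treeEdge_eq3, treeEdge_eq4, treeEdge_eq5, treeEdge_eq6]
      ring_nf
      omega)
  · rintro ⟨φ, rfl⟩
    funext k
    fin_cases k <;>
      simp only [qmap, qfun, AddMonoidHom.mk'_apply, delta0_apply] <;>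
      simp [qmap, qfun, delta0_apply, T0, T1, T2, T3, T4, T5, T6, N0, N1, N2, N3, N4] <;>
      ring

/-- the image of `δ⁰ : C⁰ ≅ ℤ⁸ → C¹ ≅ ℤ¹²` is free abelian of rank `7`,
and consequently `H^{1,6}(MSS′₆) = C¹ / Im δ⁰` is isomorphic to `ℤ⁵`. -/
theorem MSS6'_H1 :
    Nonempty ((delta0.range : AddSubgroup (CubeEdge → ℤ)) ≃+ (Fin 7 → ℤ)) ∧
    Nonempty (((CubeEdge → ℤ) ⧸ delta0.range) ≃+ (Fin 5 → ℤ)) := by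
  constructor
  · exact ⟨((QuotientAddGroup.quotientKerEquivRange delta0).symm.trans
      ((QuotientAddGroup.quotientAddEquivOfEq ker_eq.symm).trans
        (QuotientAddGroup.quotientKerEquivOfSurjective hmap hmap_surj)))⟩
  · exact ⟨(QuotientAddGroup.quotientAddEquivOfEq qker_eq.symm).trans
      (QuotientAddGroup.quotientKerEquivOfSurjective qmap qmap_surj)⟩
end

section
/- The digital n-th higher topological complexity is monotone in n: for every digitally connected digital image (X,κ) and every n ≥ 2, TC_n(X,κ) ≤ TC_{n+1}(X,κ). -/
/-- A digital path in the digital image `(X, adj)`: a function `f : ℤ → A` of length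
`len` which stays in `X` on `[0,len]_ℤ` and moves at each step to an equal or
adjacent point. -/
structure DPath {A : Type*} (X : Set A) (adj : A → A → Prop) where
  len : ℕ
  f : ℤ → A
  mem : ∀ t ∈ Set.Icc (0 : ℤ) len, f t ∈ X
  step : ∀ t : ℤ, 0 ≤ t → t < len → (f t = f (t + 1) ∨ adj (f t) (f (t + 1)))

/-- Evaluation of a digital path at time `t`, with the path held constant at its end
value after time `len` (synchronization of path lengths). -/
def DPath.eval {A : Type*} {X : Set A} {adj : A → A → Prop}
    (p : DPath X adj) (t : ℤ) : A := p.f (min t p.len)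

/-- Adjacency of digital paths: after synchronizing lengths, at each time the values
are equal or adjacent. -/
def pathAdj {A : Type*} {X : Set A} {adj : A → A → Prop}
    (p q : DPath X adj) : Prop :=
  ∀ t : ℤ, 0 ≤ t → (p.eval t = q.eval t ∨ adj (p.eval t) (q.eval t))

/-- The product adjacency on `A × A` induced by `adj`. -/
def prodAdj {A : Type*} (adj : A → A → Prop) (u v : A × A) : Prop :=
  u ≠ v ∧ (u.1 = v.1 ∨ adj u.1 v.1) ∧ (u.2 = v.2 ∨ adj u.2 v.2)

/-- `X × X` admits a cover by `l` sets, each with a digitally continuous section of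
the endpoint map `π : PX → X × X`, `π(α) = (α(0), α(len))`. -/
def TCcover {A : Type*} (X : Set A) (adj : A → A → Prop) (l : ℕ) : Prop :=
  ∃ U : Fin l → Set (A × A),
    (∀ p ∈ X ×ˢ X, ∃ i, p ∈ U i) ∧
    ∀ i, U i ⊆ X ×ˢ X ∧
      ∃ s : A × A → DPath X adj,
        (∀ u ∈ U i, (s u).f 0 = u.1 ∧ (s u).f (s u).len = u.2) ∧
        (∀ u ∈ U i, ∀ v ∈ U i, prodAdj adj u v → pathAdj (s u) (s v))

/-- The digital topological complexity number `TC(X, adj)`: the least `l ≥ 1`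
admitting such a cover. -/
noncomputable def digTC {A : Type*} (X : Set A) (adj : A → A → Prop) : ℕ :=
  sInf {l | 0 < l ∧ TCcover X adj l}

/-- Digital homotopy of maps between digital images. -/
def DigHomotopic {A B : Type*} (X : Set A) (adjA : A → A → Prop)
    (Y : Set B) (adjB : B → B → Prop) (f g : A → B) : Prop :=
  ∃ (n : ℕ) (G : A → ℤ → B),
    (∀ x ∈ X, ∀ t ∈ Set.Icc (0 : ℤ) n, G x t ∈ Y) ∧
    (∀ x ∈ X, G x 0 = f x) ∧
    (∀ x ∈ X, G x n = g x) ∧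
    (∀ x ∈ X, ∀ t : ℤ, 0 ≤ t → t < n → (G x t = G x (t + 1) ∨ adjB (G x t) (G x (t + 1)))) ∧
    (∀ t ∈ Set.Icc (0 : ℤ) n, ∀ x ∈ X, ∀ x' ∈ X,
      adjA x x' → (G x t = G x' t ∨ adjB (G x t) (G x' t)))

/-- `(X, adj)` is digitally contractible: the identity is digitally homotopic to a
constant map. -/
def DigContractible {A : Type*} (X : Set A) (adj : A → A → Prop) : Prop :=
  ∃ c ∈ X, DigHomotopic X adj X adj id (fun _ => c)

/-- `(X, adj)` is digitally connected. -/
def DigConnectedImage {A : Type*} (X : Set A) (adj : A → A → Prop) : Prop :=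
  ∀ x ∈ X, ∀ y ∈ X, Relation.ReflTransGen (fun a b => a ∈ X ∧ b ∈ X ∧ adj a b) x y

/-- An element of `X^{J_n}` (a digitally continuous map on the wedge `J_n` of `n`
digital intervals): `n` digital paths with a common starting point. -/
structure Spider {A : Type*} (n : ℕ) (X : Set A) (adj : A → A → Prop) where
  legs : Fin n → DPath X adj
  start_eq : ∀ i j, (legs i).f 0 = (legs j).f 0

/-- The endpoint fibration `e_n : X^{J_n} → X^n`, evaluating at the `n` free
endpoints of the wedge. -/
def spiderEnds {A : Type*} {n : ℕ} {X : Set A} {adj : A → A → Prop}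
    (s : Spider n X adj) : Fin n → A :=
  fun i => (s.legs i).f (s.legs i).len

/-- Adjacency of spiders: legwise path adjacency. -/
def spiderAdj {A : Type*} {n : ℕ} {X : Set A} {adj : A → A → Prop}
    (s s' : Spider n X adj) : Prop :=
  ∀ i, pathAdj (s.legs i) (s'.legs i)

/-- The product adjacency on `A^n` induced by `adj`. -/
def prodAdjN {A : Type*} {n : ℕ} (adj : A → A → Prop) (u v : Fin n → A) : Prop :=
  u ≠ v ∧ ∀ i, u i = v i ∨ adj (u i) (v i)

/-- `X^n` admits a cover by `l` sets, each with a digitally continuous section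
of the fibration `e_n : X^{J_n} → X^n`. -/
def TCnCover {A : Type*} (n : ℕ) (X : Set A) (adj : A → A → Prop) (l : ℕ) : Prop :=
  ∃ U : Fin l → Set (Fin n → A),
    (∀ p : Fin n → A, (∀ i, p i ∈ X) → ∃ i, p ∈ U i) ∧
    ∀ i, (∀ p ∈ U i, ∀ j, p j ∈ X) ∧
      ∃ s : (Fin n → A) → Spider n X adj,
        (∀ p ∈ U i, spiderEnds (s p) = p) ∧
        (∀ p ∈ U i, ∀ q ∈ U i, prodAdjN adj p q → spiderAdj (s p) (s q))

/-- The digital higher topological complexity `TC_n(X, adj)`: the digital Schwarz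
genus of the fibration `e_n`, i.e. the least `l ≥ 1` admitting such a cover. -/
noncomputable def digTCn {A : Type*} (n : ℕ) (X : Set A) (adj : A → A → Prop) : ℕ :=
  sInf {l | 0 < l ∧ TCnCover n X adj l}

section Aux

variable {A : Type*} {X : Set A} {adj : A → A → Prop}

/-- From a reflexive-transitive chain in `X`, build a digital path. -/
lemma exists_dpath {x y : A} (hx : x ∈ X)
    (h : Relation.ReflTransGen (fun a b => a ∈ X ∧ b ∈ X ∧ adj a b) x y) :
    ∃ p : DPath X adj, p.f 0 = x ∧ p.f p.len = y := by
  induction h with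
  | refl =>
      exact ⟨⟨0, fun _ => x, fun t _ => hx, fun t ht ht' => by omega⟩, rfl, rfl⟩
  | @tail b c hxb hbc ih =>
      obtain ⟨p, hp0, hpe⟩ := ih
      obtain ⟨hb, hc, hadj⟩ := hbc
      refine ⟨⟨p.len + 1, fun t => if t ≤ (p.len : ℤ) then p.f t else c, ?_, ?_⟩, ?_, ?_⟩
      · intro t ht
        simp only [Set.mem_Icc] at ht
        by_cases h : t ≤ (p.len : ℤ)
        · simpa [h] using p.mem t (by simp [Set.mem_Icc]; exact ⟨ht.1, h⟩)
        · simpa [h] using hc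
      · intro t ht ht'
        push_cast at ht'
        by_cases h : t + 1 ≤ (p.len : ℤ)
        · have h0 : t ≤ (p.len : ℤ) := by omega
          simp only [h, h0, if_true]
          exact p.step t ht (by omega)
        · have h0 : t = (p.len : ℤ) := by omega
          subst h0
          simp only [le_refl, if_true, if_neg (by omega : ¬ (p.len : ℤ) + 1 ≤ (p.len : ℤ))]
          rw [hpe]
          exact Or.inr hadj
      · simpa using hp0
      · simp only [Nat.cast_add, Nat.cast_one]
        rw [if_neg (by omega)]

/-- Over a connected image, any point of `X^k` is the endpoint tuple of a spider. -/
lemma exists_spider {k : ℕ} (hk : 0 < k) (hconn : DigConnectedImage X adj)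
    (p : Fin k → A) (hp : ∀ i, p i ∈ X) :
    ∃ s : Spider k X adj, spiderEnds s = p := by
  have h0 : p ⟨0, hk⟩ ∈ X := hp _
  have hleg : ∀ i : Fin k, ∃ q : DPath X adj, q.f 0 = p ⟨0, hk⟩ ∧ q.f q.len = p i :=
    fun i => exists_dpath h0 (hconn _ h0 _ (hp i))
  choose q hq0 hqe using hleg
  exact ⟨⟨q, fun i j => by rw [hq0, hq0]⟩, funext fun i => hqe i⟩

/-- A constant spider. -/
def constSpider (k : ℕ) {c : A} (hc : c ∈ X) : Spider k X adj :=
  ⟨fun _ => ⟨0, fun _ => c, fun t _ => hc, fun t ht ht' => by omega⟩, fun _ _ => rfl⟩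

/-- For a finite connected nonempty image, some `TCnCover` exists (singleton cover). -/
lemma tcnCover_exists (hX : X.Finite) (hne : X.Nonempty)
    (hconn : DigConnectedImage X adj) (k : ℕ) (hk : 0 < k) :
    ∃ l, 0 < l ∧ TCnCover k X adj l := by
  classical
  obtain ⟨c, hc⟩ := hne
  have hfin : (Set.pi (Set.univ : Set (Fin k)) fun _ => X).Finite :=
    Set.Finite.pi (fun _ => hX)
  set F : Finset (Fin k → A) := hfin.toFinset with hF
  have hmemF : ∀ p : Fin k → A, p ∈ F ↔ ∀ i, p i ∈ X := by
    intro p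
    simp [hF, Set.Finite.mem_toFinset, Set.mem_pi]
  have hFne : (fun _ : Fin k => c) ∈ F := (hmemF _).2 fun _ => hc
  have hcard : 0 < F.card := Finset.card_pos.2 ⟨_, hFne⟩
  refine ⟨F.card, hcard, ?_⟩
  set e := F.equivFin with he
  refine ⟨fun i => {((e.symm i : F) : Fin k → A)}, ?_, ?_⟩
  · intro p hp
    refine ⟨e ⟨p, (hmemF p).2 hp⟩, ?_⟩
    simp
  · intro i
    constructor
    · intro p hp j
      simp only [Set.mem_singleton_iff] at hp
      subst hp
      exact (hmemF _).1 (e.symm i).2 j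
    · refine ⟨fun u => if h : ∀ j, u j ∈ X then
        (exists_spider hk hconn u h).choose else constSpider k hc, ?_, ?_⟩
      · intro p hp
        have hpX : ∀ j, p j ∈ X := by
          simp only [Set.mem_singleton_iff] at hp
          subst hp
          exact (hmemF _).1 (e.symm i).2
        simp only [dif_pos hpX]
        exact (exists_spider hk hconn p hpX).choose_spec
      · intro p hp q hq hpq
        simp only [Set.mem_singleton_iff] at hp hq
        exact absurd (hp.trans hq.symm) hpq.1

/-- Restriction of the fibration section data: a cover for `n+1` gives one for `n`. -/
lemma tcnCover_restrict {n l : ℕ} (hn : 0 < n)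
    (h : TCnCover (n + 1) X adj l) : TCnCover n X adj l := by
  classical
  obtain ⟨U, hcov, hU⟩ := h
  set ext : (Fin n → A) → (Fin (n + 1) → A) :=
    fun p => Fin.snoc p (p ⟨0, hn⟩) with hext
  have hext_cast : ∀ (p : Fin n → A) (i : Fin n), ext p i.castSucc = p i := by
    intro p i; simp [hext]
  have hext_last : ∀ p : Fin n → A, ext p (Fin.last n) = p ⟨0, hn⟩ := by
    intro p; simp [hext]
  have hext_inj : Function.Injective ext := by
    intro p q hpq
    funext i
    have := congrFun hpq i.castSucc
    rwa [hext_cast, hext_cast] at this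
  refine ⟨fun i => {p | ext p ∈ U i}, ?_, ?_⟩
  · intro p hp
    have : ∀ j, ext p j ∈ X := by
      intro j
      refine Fin.lastCases ?_ ?_ j
      · rw [hext_last]; exact hp _
      · intro i; rw [hext_cast]; exact hp i
    exact hcov (ext p) this
  · intro i
    obtain ⟨hUX, s, hs_end, hs_adj⟩ := hU i
    refine ⟨?_, ?_⟩
    · intro p hp j
      have := hUX (ext p) hp j.castSucc
      rwa [hext_cast] at this
    · refine ⟨fun p => ⟨fun j => (s (ext p)).legs j.castSucc,
        fun j j' => (s (ext p)).start_eq _ _⟩, ?_, ?_⟩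
      · intro p hp
        funext j
        have := congrFun (hs_end (ext p) hp) j.castSucc
        rw [← hext_cast p j]
        exact this
      · intro p hp q hq hpq
        have hpq' : prodAdjN adj (ext p) (ext q) := by
          refine ⟨fun h => hpq.1 (hext_inj h), ?_⟩
          intro j
          refine Fin.lastCases ?_ ?_ j
          · rw [hext_last, hext_last]; exact hpq.2 _
          · intro i'; rw [hext_cast, hext_cast]; exact hpq.2 i'
        exact fun j => hs_adj (ext p) hp (ext q) hq hpq' j.castSucc

end Aux

/-- the digital higher topological complexity is monotone in `n`: for
every digitally connected digital image `(X, κ)` and every `n ≥ 2`,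
`TC_n(X, κ) ≤ TC_{n+1}(X, κ)`. -/
theorem digTCn_mono {m : ℕ} (X : Set (Fin m → ℤ))
    (κ : (Fin m → ℤ) → (Fin m → ℤ) → Prop) (hX : X.Finite) (hne : X.Nonempty)
    (hconn : DigConnectedImage X κ) (n : ℕ) (hn : 2 ≤ n) :
    digTCn n X κ ≤ digTCn (n + 1) X κ := by
  have hS : {l | 0 < l ∧ TCnCover (n + 1) X κ l}.Nonempty :=
    tcnCover_exists hX hne hconn (n + 1) (by omega)
  have hmem := Nat.sInf_mem hS
  exact Nat.sInf_le ⟨hmem.1, tcnCover_restrict (by omega) hmem.2⟩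
end
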